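/- Under the g-FOB model on a rooted phylogenetic X-tree with edge lengths, the variance of future phylogenetic diversity is Var[φ] = Σ_e λ_e² P_e (1 − P_e) + 2 Σ_{(e,f) : C(f) ⊊ C(e)} λ_e λ_f P_f (1 − P_e), where the second sum ranges over ordered pairs of distinct edges (e,f) whose clusters satisfy C(f) strictly contained in C(e). -/

import Mathlib

open MeasureTheory ProbabilityTheory Finset
open scoped Classical

set_option maxHeartbeats 1000000 in
/-- Under the g-FOB model on a rooted phylogenetic tree (encoded by the
distinct clusters `C e` of its edges, forming a laminar family), the variance of future
phylogenetic diversity `φ = ∑ e, lam e * Y e` is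
`Var[φ] = ∑ e, (lam e)^2 * P e * (1 - P e)
        + 2 * ∑_{(e,f) : C f ⊊ C e} lam e * lam f * P f * (1 - P e)`,
where the second sum ranges over ordered pairs of distinct edges `(e, f)` with
`C f` strictly contained in `C e`. -/
theorem variance_of_future_PD
    {Ω : Type*} [MeasurableSpace Ω] (μ : Measure Ω) [IsProbabilityMeasure μ]
    {ι : Type*} [Fintype ι]
    (surv : ι → Ω → Bool)
    (hmeas : ∀ i, Measurable (surv i))
    (hindep : iIndepFun surv μ)
    (p : ι → ℝ) (hp01 : ∀ i, p i ∈ Set.Icc (0 : ℝ) 1)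
    (hp : ∀ i, (μ {ω | surv i ω = true}).toReal = p i)
    -- the tree: edges `η`, distinct clusters `C` forming a laminar family, lengths `lam`
    {η : Type*} [Fintype η]
    (C : η → Finset ι) (hC : ∀ e, (C e).Nonempty)
    (hC_distinct : Function.Injective C)
    (hC_laminar : ∀ e f, C e ⊆ C f ∨ C f ⊆ C e ∨ Disjoint (C e) (C f))
    (lam : η → ℝ) (hlam : ∀ e, 0 ≤ lam e)
    (Y : η → Ω → ℝ)
    (hY : ∀ e ω, Y e ω = if ∃ i ∈ C e, surv i ω = true then 1 else 0)
    (P : η → ℝ) (hP : ∀ e, P e = (μ {ω | Y e ω = 1}).toReal)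
    (φ : Ω → ℝ) (hφ : ∀ ω, φ ω = ∑ e, lam e * Y e ω) :
    variance φ μ =
      (∑ e, (lam e) ^ 2 * P e * (1 - P e)) +
      2 * ∑ ef ∈ Finset.univ.filter (fun ef : η × η => C ef.2 ⊂ C ef.1),
            lam ef.1 * lam ef.2 * P ef.2 * (1 - P ef.1) := by
  classical
  -- the survival events of the clusters
  set A : η → Set Ω := fun e => {ω | ∃ i ∈ C e, surv i ω = true} with hA
  have hA_meas : ∀ e, MeasurableSet (A e) := by
    intro e
    have h1 : A e = ⋃ i ∈ (C e : Set ι), surv i ⁻¹' {true} := by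
      ext ω; simp [hA]
    rw [h1]
    exact MeasurableSet.biUnion (C e).countable_toSet
      (fun i _ => hmeas i (measurableSet_singleton true))
  have hYind : ∀ e, Y e = (A e).indicator (fun _ => (1 : ℝ)) := by
    intro e; funext ω
    rw [hY]
    by_cases h : ω ∈ A e
    · have h' : ∃ i ∈ C e, surv i ω = true := h
      rw [if_pos h', Set.indicator_of_mem h]
    · have h' : ¬ ∃ i ∈ C e, surv i ω = true := h
      rw [if_neg h', Set.indicator_of_notMem h]
  -- the set where Y e = 1 is A e
  have hpre : ∀ e, {ω | Y e ω = 1} = A e := by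
    intro e; ext ω
    by_cases h : ω ∈ A e <;> simp [hYind, Set.indicator_apply, h]
  have hmuA : ∀ e, P e = (μ (A e)).toReal := by
    intro e; rw [hP, hpre]
  -- integrals of the indicators
  have hYint : ∀ e, Integrable (Y e) μ := by
    intro e; rw [hYind]
    exact (integrable_const (1 : ℝ)).indicator (hA_meas e)
  have hEY : ∀ e, ∫ ω, Y e ω ∂μ = P e := by
    intro e
    rw [hYind, MeasureTheory.integral_indicator_const (1 : ℝ) (hA_meas e),
      smul_eq_mul, mul_one, measureReal_def, hmuA]
  set M : η → η → ℝ := fun e f => (μ (A e ∩ A f)).toReal with hMdef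
  have hYmul : ∀ e f, (fun ω => Y e ω * Y f ω) = (A e ∩ A f).indicator (fun _ => (1 : ℝ)) := by
    intro e f; funext ω
    by_cases he : ω ∈ A e <;> by_cases hf : ω ∈ A f <;>
      simp [hYind, Set.indicator_apply, he, hf]
  have hYYint : ∀ e f, Integrable (fun ω => Y e ω * Y f ω) μ := by
    intro e f; rw [hYmul]
    exact (integrable_const (1 : ℝ)).indicator ((hA_meas e).inter (hA_meas f))
  have hEYY : ∀ e f, ∫ ω, Y e ω * Y f ω ∂μ = M e f := by
    intro e f
    rw [hYmul, MeasureTheory.integral_indicator_const (1 : ℝ)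
      ((hA_meas e).inter (hA_meas f)), smul_eq_mul, mul_one, measureReal_def]
  -- M for nested clusters
  have hsub : ∀ e f, C e ⊆ C f → M e f = P e := by
    intro e f h
    have hAsub : A e ⊆ A f := by
      intro ω hω
      obtain ⟨i, hi, hs⟩ := hω
      exact ⟨i, h hi, hs⟩
    rw [hMdef]
    simp only
    rw [Set.inter_eq_left.mpr hAsub, hmuA]
  have hMsymm : ∀ e f, M e f = M f e := by
    intro e f; rw [hMdef]; simp only [Set.inter_comm]
  -- M for disjoint clusters via independence
  have hdisj : ∀ e f, Disjoint (C e) (C f) → M e f = P e * P f := by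
    intro e f h
    have h1 := hindep.indepFun_finset (C e) (C f) h hmeas
    have hindYY : IndepFun (Y e) (Y f) μ := by
      have hg : ∀ (g : η), Measurable (fun v : (↥(C g) → Bool) =>
          if ∃ i : ↥(C g), v i = true then (1:ℝ) else 0) :=
        fun g => measurable_of_countable _
      have h2 := h1.comp (hg e) (hg f)
      have heq : ∀ (g : η), ((fun v : (↥(C g) → Bool) =>
          if ∃ i : ↥(C g), v i = true then (1:ℝ) else 0) ∘
            (fun ω (i : ↥(C g)) => surv (↑i) ω)) = Y g := by
        intro g; funext ω
        rw [hY]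
        simp only [Function.comp_apply]
        refine if_congr ?_ rfl rfl
        simp [Subtype.exists]
      rwa [heq e, heq f] at h2
    have h3 := hindYY.measure_inter_preimage_eq_mul {1} {1}
      (measurableSet_singleton 1) (measurableSet_singleton 1)
    have h4 : ∀ g, Y g ⁻¹' ({1} : Set ℝ) = A g := by
      intro g; ext ω; simp only [Set.mem_preimage, Set.mem_singleton_iff]
      exact (Set.ext_iff.mp (hpre g) ω)
    rw [h4, h4] at h3
    rw [hMdef]
    simp only
    rw [h3, ENNReal.toReal_mul, hmuA, hmuA]
  -- Memℒp
  have hYmem : ∀ e, MemLp (Y e) 2 μ := by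
    intro e
    refine (memLp_top_of_bound ?_ 1 ?_).mono_exponent le_top
    · rw [hYind]
      exact (measurable_const.indicator (hA_meas e)).aestronglyMeasurable
    · filter_upwards with ω
      rw [hYind]
      by_cases h : ω ∈ A e <;> simp [Set.indicator_apply, h]
  have hφmem : MemLp φ 2 μ := by
    have hφ' : φ = fun ω => ∑ e, lam e * Y e ω := funext hφ
    rw [hφ']
    exact memLp_finset_sum _ (fun e _ => (hYmem e).const_mul (lam e))
  -- compute the variance
  rw [variance_eq_sub hφmem]
  have hintφ : ∫ ω, φ ω ∂μ = ∑ e, lam e * P e := by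
    simp_rw [hφ]
    rw [integral_finset_sum _ (fun e _ => (hYint e).const_mul (lam e))]
    exact Finset.sum_congr rfl fun e _ => by rw [integral_const_mul, hEY]
  have hintφ2 : ∫ ω, (φ ^ 2) ω ∂μ = ∑ e, ∑ f, lam e * lam f * M e f := by
    have hsq : (φ ^ 2) = fun ω => ∑ e, ∑ f, lam e * lam f * (Y e ω * Y f ω) := by
      funext ω
      simp only [Pi.pow_apply, hφ, sq, Finset.sum_mul_sum]
      exact Finset.sum_congr rfl fun e _ => Finset.sum_congr rfl fun f _ => by ring
    rw [hsq]
    rw [integral_finset_sum _ (fun e _ => integrable_finset_sum _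
      (fun f _ => ((hYYint e f).const_mul (lam e * lam f))))]
    refine Finset.sum_congr rfl fun e _ => ?_
    rw [integral_finset_sum _ (fun f _ => ((hYYint e f).const_mul (lam e * lam f)))]
    exact Finset.sum_congr rfl fun f _ => by rw [integral_const_mul, hEYY]
  rw [hintφ2, hintφ]
  -- now purely algebraic
  have hsqsum : (∑ e, lam e * P e) ^ 2 = ∑ e, ∑ f, (lam e * P e) * (lam f * P f) := by
    rw [sq, Finset.sum_mul_sum]
  rw [hsqsum, ← Finset.sum_sub_distrib]
  simp_rw [← Finset.sum_sub_distrib]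
  -- pointwise identification of covariance terms
  have key : ∀ e f, lam e * lam f * M e f - lam e * P e * (lam f * P f) =
      (if e = f then lam e ^ 2 * P e * (1 - P e) else 0)
      + ((if C f ⊂ C e then lam e * lam f * P f * (1 - P e) else 0)
      + (if C e ⊂ C f then lam e * lam f * P e * (1 - P f) else 0)) := by
    intro e f
    by_cases hef : e = f
    · subst hef
      have hirr : ¬ C e ⊂ C e := fun h2 => lt_irrefl _ (Finset.lt_iff_ssubset.mpr h2)
      rw [if_pos rfl, if_neg hirr]
      rw [hsub e e subset_rfl]
      ring
    · rw [if_neg hef]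
      have hne : C e ≠ C f := fun h => hef (hC_distinct h)
      rcases hC_laminar e f with h | h | h
      · have hss : C e ⊂ C f := h.ssubset_of_ne hne
        rw [if_neg (fun h2 => ssubset_asymm hss h2), if_pos hss, hsub e f h]
        ring
      · have hss : C f ⊂ C e := h.ssubset_of_ne hne.symm
        rw [if_pos hss, if_neg (fun h2 => ssubset_asymm hss h2),
          hMsymm, hsub f e h]
        ring
      · have hnf : ¬ C f ⊂ C e := by
          intro h2
          exact (hC f).ne_empty (Finset.eq_empty_of_forall_notMem
            (fun x hx => (Finset.disjoint_left.mp h (h2.subset hx)) hx))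
        have hne' : ¬ C e ⊂ C f := by
          intro h2
          exact (hC e).ne_empty (Finset.eq_empty_of_forall_notMem
            (fun x hx => (Finset.disjoint_right.mp h (h2.subset hx)) hx))
        rw [if_neg hnf, if_neg hne', hdisj e f h]
        ring
  simp_rw [key]
  simp only [Finset.sum_add_distrib]
  -- diagonal sum
  have hdiag : ∑ e, ∑ f, (if e = f then lam e ^ 2 * P e * (1 - P e) else 0)
      = ∑ e, lam e ^ 2 * P e * (1 - P e) := by
    refine Finset.sum_congr rfl fun e _ => ?_
    rw [Finset.sum_ite_eq univ e (fun _ => lam e ^ 2 * P e * (1 - P e)),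
      if_pos (Finset.mem_univ e)]
  -- convert double sums to sums over the product, then to sums over filters
  have h2 : ∑ e, ∑ f, (if C f ⊂ C e then lam e * lam f * P f * (1 - P e) else 0)
      = ∑ ef ∈ Finset.univ.filter (fun ef : η × η => C ef.2 ⊂ C ef.1),
          lam ef.1 * lam ef.2 * P ef.2 * (1 - P ef.1) := by
    rw [Finset.sum_filter, ← Finset.univ_product_univ, Finset.sum_product]
  have h3 : ∑ e, ∑ f, (if C e ⊂ C f then lam e * lam f * P e * (1 - P f) else 0)
      = ∑ ef ∈ Finset.univ.filter (fun ef : η × η => C ef.2 ⊂ C ef.1),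
          lam ef.1 * lam ef.2 * P ef.2 * (1 - P ef.1) := by
    rw [show (∑ e, ∑ f, (if C e ⊂ C f then lam e * lam f * P e * (1 - P f) else 0))
        = ∑ ef ∈ Finset.univ.filter (fun ef : η × η => C ef.1 ⊂ C ef.2),
            lam ef.1 * lam ef.2 * P ef.1 * (1 - P ef.2) by
      rw [Finset.sum_filter, ← Finset.univ_product_univ, Finset.sum_product]]
    refine Finset.sum_bij' (fun ef _ => Prod.swap ef) (fun ef _ => Prod.swap ef)
      ?_ ?_ ?_ ?_ ?_
    · intro ef hef
      simp only [Finset.mem_filter, Finset.mem_univ, true_and] at hef ⊢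
      exact hef
    · intro ef hef
      simp only [Finset.mem_filter, Finset.mem_univ, true_and] at hef ⊢
      exact hef
    · intro ef _; rfl
    · intro ef _; rfl
    · intro ef _
      simp only [Prod.fst_swap, Prod.snd_swap]
      ring
  rw [hdiag, h2, h3]
  ring
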